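/- Define A_{μ,i}^n := ∑_{k=i}^{n} (−1)^{n-k} (n-1 choose k-1)(k-1)_{[i-1]} μ_{N-k} with μ_j = j(N-j)/N + juν₁. Then A_{μ,i}^n = 0 for 1 ≤ i ≤ n−3, A_{μ,n-2}^n = −(n-1)!/N, A_{μ,n-1}^n = (n-1)!·((N−2n+1)/N − uν₁), and A_{μ,n}^n = (n-1)!·(N−n)·(n/N + uν₁). -/

import Mathlib

open Finset

private lemma prod_cast_descFactorial (a r : ℕ) :
    (∏ t ∈ Finset.range r, ((a:ℝ) - t)) = (a.descFactorial r : ℝ) := by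
  induction r with
  | zero => simp
  | succ r ih =>
    rw [Finset.prod_range_succ, ih, Nat.descFactorial_succ]
    rcases le_or_gt r a with h | h
    · push_cast [h]
      ring
    · rw [Nat.descFactorial_eq_zero_iff_lt.mpr h]
      simp

private lemma alt_sum (M : ℕ) :
    ∑ t ∈ Finset.range (M+1), (-1:ℝ)^(M-t) * (M.choose t : ℝ)
      = if M = 0 then 1 else 0 := by
  have hint := Int.alternating_sum_range_choose (n := M)
  have h1 : ∑ t ∈ Finset.range (M+1), (-1:ℝ)^(M-t) * (M.choose t : ℝ)
      = (-1)^M * ∑ t ∈ Finset.range (M+1), (-1:ℝ)^t * (M.choose t : ℝ) := by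
    rw [Finset.mul_sum]
    refine Finset.sum_congr rfl fun t ht => ?_
    rw [Finset.mem_range] at ht
    have ht' : t ≤ M := Nat.lt_succ_iff.mp ht
    have h2 : ((-1:ℝ))^(M-t) = (-1)^M * (-1)^t := by
      conv_rhs => rw [← Nat.sub_add_cancel ht', pow_add, mul_assoc, ← mul_pow]
      simp
    rw [h2]; ring
  rw [h1]
  have h3 : ∑ t ∈ Finset.range (M+1), (-1:ℝ)^t * (M.choose t : ℝ)
      = ((∑ t ∈ Finset.range (M+1), ((-1:ℤ))^t * (M.choose t : ℤ) : ℤ) : ℝ) := by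
    push_cast; rfl
  rw [h3, hint]
  rcases eq_or_ne M 0 with h | h <;> simp [h]

private lemma key_sum (m r : ℕ) :
    ∑ j ∈ Finset.range (m+1), (-1:ℝ)^(m-j) * (m.choose j : ℝ) * (j.descFactorial r : ℝ)
      = if r = m then (m.factorial : ℝ) else 0 := by
  rcases lt_or_ge m r with h | h
  · rw [if_neg (by omega), Finset.sum_eq_zero]
    intro j hj
    rw [Finset.mem_range] at hj
    rw [Nat.descFactorial_eq_zero_iff_lt.mpr (by omega)]
    simp
  · have h1 : ∑ j ∈ Finset.Ico 0 r,
        (-1:ℝ)^(m-j) * (m.choose j : ℝ) * (j.descFactorial r : ℝ) = 0 := by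
      apply Finset.sum_eq_zero
      intro j hj
      rw [Finset.mem_Ico] at hj
      rw [Nat.descFactorial_eq_zero_iff_lt.mpr hj.2]
      simp
    have h2 := Finset.sum_Ico_consecutive
      (fun j => (-1:ℝ)^(m-j) * (m.choose j : ℝ) * (j.descFactorial r : ℝ))
      (Nat.zero_le r) (by omega : r ≤ m+1)
    rw [Finset.range_eq_Ico, ← h2, h1, zero_add, Finset.sum_Ico_eq_sum_range]
    have h3 : ∀ t ∈ Finset.range (m+1-r),
        (-1:ℝ)^(m-(r+t)) * (m.choose (r+t) : ℝ) * (((r+t).descFactorial r : ℕ) : ℝ)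
        = ((r.factorial : ℝ) * (m.choose r : ℝ)) *
            ((-1:ℝ)^((m-r)-t) * (((m-r).choose t : ℕ) : ℝ)) := by
      intro t ht
      rw [Finset.mem_range] at ht
      have h4 : r + t ≤ m := by omega
      have h5 : m.choose (r+t) * (r+t).choose r = m.choose r * (m-r).choose t := by
        have := Nat.choose_mul (n := m) (k := r+t) (s := r) (Nat.le_add_right r t)
        simpa using this
      have h5' : (m.choose (r+t) : ℝ) * ((r+t).choose r : ℝ)
          = (m.choose r : ℝ) * ((m-r).choose t : ℝ) := by exact_mod_cast h5
      rw [Nat.descFactorial_eq_factorial_mul_choose]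
      have h6 : m - (r+t) = (m-r) - t := by omega
      rw [h6]
      push_cast
      linear_combination (-1:ℝ)^((m-r)-t) * (r.factorial : ℝ) * h5'
    rw [Finset.sum_congr rfl h3, ← Finset.mul_sum]
    rw [show m + 1 - r = (m - r) + 1 from by omega, alt_sum (m-r)]
    rcases eq_or_ne r m with h8 | h8
    · subst h8; simp
    · rw [if_neg (by omega), if_neg h8, mul_zero]

private lemma master (N n : ℕ) (hn : 1 ≤ n) (u ν1 : ℝ) (s : ℕ) (hs : s + 1 ≤ n) :
    ∑ k ∈ Finset.Icc (s+1) n,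
      (-1:ℝ)^(n-k) * ((n-1).choose (k-1) : ℝ) *
        (∏ j ∈ Finset.range s, (((k:ℝ) - 1) - j)) *
        (((N:ℝ) - k) * k / N + ((N:ℝ) - k) * u * ν1)
    = (-1/N) * (if s+2 = n-1 then ((n-1).factorial : ℝ) else 0)
      + ((-1/N)*(2*(s:ℝ)+1) + ((N:ℝ)-2)/N - u*ν1) *
          (if s+1 = n-1 then ((n-1).factorial : ℝ) else 0)
      + ((-1/N)*(s:ℝ)^2 + (((N:ℝ)-2)/N - u*ν1)*(s:ℝ) + ((N:ℝ)-1)/N + ((N:ℝ)-1)*u*ν1) *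
          (if s = n-1 then ((n-1).factorial : ℝ) else 0) := by
  have step1 : ∑ k ∈ Finset.Icc (s+1) n,
      (-1:ℝ)^(n-k) * ((n-1).choose (k-1) : ℝ) *
        (∏ j ∈ Finset.range s, (((k:ℝ) - 1) - j)) *
        (((N:ℝ) - k) * k / N + ((N:ℝ) - k) * u * ν1)
      = ∑ k ∈ Finset.Icc 1 n,
      (-1:ℝ)^(n-k) * ((n-1).choose (k-1) : ℝ) *
        (∏ j ∈ Finset.range s, (((k:ℝ) - 1) - j)) *
        (((N:ℝ) - k) * k / N + ((N:ℝ) - k) * u * ν1) := by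
    apply Finset.sum_subset
    · intro k hk; rw [Finset.mem_Icc] at *
      constructor <;> omega
    · intro k hk hk2
      rw [Finset.mem_Icc] at hk
      rw [Finset.mem_Icc] at hk2
      have hk1 : 1 ≤ k := hk.1
      have hks : k - 1 < s := by omega
      have hc : ((k:ℝ) - 1) = (((k-1 : ℕ) : ℕ) : ℝ) := by push_cast [hk1]; ring
      rw [hc, prod_cast_descFactorial, Nat.descFactorial_eq_zero_iff_lt.mpr hks]
      simp
  rw [step1]
  rw [show Finset.Icc 1 n = Finset.Ico 1 (n+1) from (Finset.Ico_add_one_right_eq_Icc 1 n).symm,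
    Finset.sum_Ico_eq_sum_range]
  have hrn : n + 1 - 1 = n := by omega
  rw [hrn]
  have step3 : ∀ j ∈ Finset.range n,
      (-1:ℝ)^(n-(1+j)) * ((n-1).choose ((1+j)-1) : ℝ) *
        (∏ t ∈ Finset.range s, ((((1+j : ℕ):ℝ) - 1) - t)) *
        (((N:ℝ) - (1+j : ℕ)) * (1+j : ℕ) / N + ((N:ℝ) - (1+j : ℕ)) * u * ν1)
      = (-1/N) * ((-1:ℝ)^((n-1)-j) * ((n-1).choose j : ℝ) * ((j.descFactorial (s+2) : ℕ) : ℝ))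
        + ((-1/N)*(2*(s:ℝ)+1) + ((N:ℝ)-2)/N - u*ν1) *
            ((-1:ℝ)^((n-1)-j) * ((n-1).choose j : ℝ) * ((j.descFactorial (s+1) : ℕ) : ℝ))
        + ((-1/N)*(s:ℝ)^2 + (((N:ℝ)-2)/N - u*ν1)*(s:ℝ) + ((N:ℝ)-1)/N + ((N:ℝ)-1)*u*ν1) *
            ((-1:ℝ)^((n-1)-j) * ((n-1).choose j : ℝ) * ((j.descFactorial s : ℕ) : ℝ)) := by
    intro j hj
    have e1 : 1 + j - 1 = j := by omega
    have e2 : n - (1+j) = (n-1) - j := by omega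
    have e3 : ((1+j : ℕ):ℝ) - 1 = (j:ℝ) := by push_cast; ring
    rw [e1, e2, e3,
      ← prod_cast_descFactorial j (s+2), ← prod_cast_descFactorial j (s+1),
      ← prod_cast_descFactorial j s,
      Finset.prod_range_succ, Finset.prod_range_succ]
    push_cast
    ring
  rw [Finset.sum_congr rfl step3, Finset.sum_add_distrib, Finset.sum_add_distrib,
    ← Finset.mul_sum, ← Finset.mul_sum, ← Finset.mul_sum]
  have hr : Finset.range n = Finset.range ((n-1)+1) := by congr 1; omega
  rw [hr, key_sum, key_sum, key_sum]

/-- Evaluation of the quantities `A_{μ,i}^n` from the proof of Theorem 5.1: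
they vanish for `i ≤ n-3`, and take explicit values for `i = n-2, n-1, n`.
Here `μ_{N-k} = (N-k)k/N + (N-k)uν₁`. -/
theorem stmt11 (N n : ℕ) (hn : 3 ≤ n) (hnN : n ≤ N - 1) (u ν1 : ℝ)
    (hu : 0 ≤ u) (hν1 : 0 ≤ ν1)
    (A : ℕ → ℝ)
    (hA : ∀ i, A i = ∑ k ∈ Finset.Icc i n,
      (-1:ℝ)^(n-k) * ((n-1).choose (k-1) : ℝ) *
        (∏ j ∈ Finset.range (i-1), (((k:ℝ) - 1) - j)) *
        (((N:ℝ) - k) * k / N + ((N:ℝ) - k) * u * ν1)) :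
    (∀ i, 1 ≤ i → i ≤ n - 3 → A i = 0) ∧
    A (n-2) = -((n-1).factorial : ℝ) / N ∧
    A (n-1) = ((n-1).factorial : ℝ) * (((N:ℝ) - 2*n + 1) / N - u * ν1) ∧
    A n = ((n-1).factorial : ℝ) * ((N:ℝ) - n) * ((n:ℝ) / N + u * ν1) := by
  refine ⟨?_, ?_, ?_, ?_⟩
  · intro i hi1 hi2
    rw [hA i]
    have h := master N n (by omega) u ν1 (i-1) (by omega)
    rw [show (i-1)+1 = i from by omega] at h
    rw [h, if_neg (by omega), if_neg (by omega), if_neg (by omega)]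
    ring
  · rw [hA (n-2), show n-2-1 = n-3 from by omega]
    have h := master N n (by omega) u ν1 (n-3) (by omega)
    rw [show (n-3)+1 = n-2 from by omega] at h
    rw [h, if_pos (by omega), if_neg (by omega), if_neg (by omega)]
    ring
  · rw [hA (n-1), show n-1-1 = n-2 from by omega]
    have h := master N n (by omega) u ν1 (n-2) (by omega)
    rw [show (n-2)+1 = n-1 from by omega] at h
    rw [h, if_neg (by omega), if_pos (by omega), if_neg (by omega)]
    push_cast [Nat.cast_sub (show 2 ≤ n from by omega)]
    ring
  · rw [hA n, show n-1 = n-1 from rfl]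
    have h := master N n (by omega) u ν1 (n-1) (by omega)
    rw [show (n-1)+1 = n from by omega] at h
    rw [h, if_neg (by omega), if_neg (by omega), if_pos rfl]
    push_cast [Nat.cast_sub (show 1 ≤ n from by omega)]
    ring
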